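/- Let λ ∈ ℝ be such that the only common zero in ℂ³ of the three quadrics x² + λyz, y² + λzx, z² + λxy is (0,0,0). Let I be the ideal of the polynomial ring ℝ[x,y,z] generated by x² + λyz, y² + λzx, z² + λxy, and let m be the ideal generated by x, y, z. Then m²·I = m⁴; in particular every monomial of degree 4 in x, y, z lies in I. -/

import Mathlib

open MvPolynomial Pointwise

set_option maxHeartbeats 4000000

private lemma memCongr {R : Type*} [CommRing R] {J : Ideal R} {p q : R}
    (h : q ∈ J) (e : p = q) : p ∈ J := e ▸ h

/-- if the three quadrics `x² + λyz`, `y² + λzx`, `z² + λxy` have no common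
complex zero besides the origin, then for the ideal `I` they generate in `ℝ[x,y,z]` and
the maximal ideal `m = (x,y,z)` one has `m²·I = m⁴`; in particular every monomial of
degree `4` lies in `I`. -/
theorem stmt7 (lam : ℝ)
    (hzero : ∀ v : Fin 3 → ℂ,
      aeval v (X 0 ^ 2 + C lam * X 1 * X 2 : MvPolynomial (Fin 3) ℝ) = 0 →
      aeval v (X 1 ^ 2 + C lam * X 2 * X 0 : MvPolynomial (Fin 3) ℝ) = 0 →
      aeval v (X 2 ^ 2 + C lam * X 0 * X 1 : MvPolynomial (Fin 3) ℝ) = 0 → v = 0) :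
    (Ideal.span {X 0, X 1, X 2} : Ideal (MvPolynomial (Fin 3) ℝ)) ^ 2 *
        Ideal.span {X 0 ^ 2 + C lam * X 1 * X 2, X 1 ^ 2 + C lam * X 2 * X 0,
          X 2 ^ 2 + C lam * X 0 * X 1} =
      (Ideal.span {X 0, X 1, X 2} : Ideal (MvPolynomial (Fin 3) ℝ)) ^ 4 ∧
    ∀ a b c : ℕ, a + b + c = 4 →
      (X 0 : MvPolynomial (Fin 3) ℝ) ^ a * X 1 ^ b * X 2 ^ c ∈
        (Ideal.span {X 0 ^ 2 + C lam * X 1 * X 2, X 1 ^ 2 + C lam * X 2 * X 0,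
          X 2 ^ 2 + C lam * X 0 * X 1} : Ideal (MvPolynomial (Fin 3) ℝ)) := by
  -- exclude `lam = -1` using the hypothesis on common zeros
  have hlam : lam ≠ -1 := by
    intro hl
    set s : ℂ := ((Real.sqrt 3 : ℝ) : ℂ) with hsdef
    have hs : s ^ 2 = 3 := by
      rw [hsdef]; norm_cast; exact Real.sq_sqrt (by norm_num)
    set ω : ℂ := (-1 + Complex.I * s) / 2 with hω_def
    have hI : (Complex.I) ^ 2 = -1 := Complex.I_sq
    have hω : ω ^ 3 = 1 := by
      rw [hω_def]
      linear_combination ((Complex.I * s - 3) * Complex.I ^ 2 / 8) * hs +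
        (3 * (Complex.I * s - 3) / 8) * hI
    have h := hzero ![1, ω, ω ^ 2] ?_ ?_ ?_
    · have h0 := congrFun h 0
      simp at h0
    · simp only [map_add, map_mul, map_pow, aeval_X, aeval_C, hl]
      simp only [Matrix.cons_val_zero, Matrix.cons_val_one, Matrix.head_cons,
        Matrix.cons_val_two, Matrix.tail_cons]
      push_cast
      linear_combination -hω
    · simp only [map_add, map_mul, map_pow, aeval_X, aeval_C, hl]
      simp only [Matrix.cons_val_zero, Matrix.cons_val_one, Matrix.head_cons,
        Matrix.cons_val_two, Matrix.tail_cons]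
      push_cast
      ring
    · simp only [map_add, map_mul, map_pow, aeval_X, aeval_C, hl]
      simp only [Matrix.cons_val_zero, Matrix.cons_val_one, Matrix.head_cons,
        Matrix.cons_val_two, Matrix.tail_cons]
      push_cast
      linear_combination ω * hω
  have hD : (1 : ℝ) + lam ^ 3 ≠ 0 := by
    intro h
    have hfac : (1 + lam) * (1 - lam + lam ^ 2) = 0 := by linear_combination h
    rcases mul_eq_zero.mp hfac with h1 | h2
    · exact hlam (by linarith)
    · nlinarith [sq_nonneg (2 * lam - 1)]
  set m : Ideal (MvPolynomial (Fin 3) ℝ) := Ideal.span {X 0, X 1, X 2} with hm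
  set Iq : Ideal (MvPolynomial (Fin 3) ℝ) :=
    Ideal.span {X 0 ^ 2 + C lam * X 1 * X 2, X 1 ^ 2 + C lam * X 2 * X 0,
      X 2 ^ 2 + C lam * X 0 * X 1} with hIq
  have hx : ∀ i j : Fin 3, (X i * X j : MvPolynomial (Fin 3) ℝ) ∈ m ^ 2 := by
    intro i j
    rw [pow_two]
    refine Ideal.mul_mem_mul (Ideal.subset_span ?_) (Ideal.subset_span ?_) <;>
      fin_cases i <;> fin_cases j <;> simp
  have hq1 : (X 0 ^ 2 + C lam * X 1 * X 2 : MvPolynomial (Fin 3) ℝ) ∈ Iq :=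
    Ideal.subset_span (by simp)
  have hq2 : (X 1 ^ 2 + C lam * X 2 * X 0 : MvPolynomial (Fin 3) ℝ) ∈ Iq :=
    Ideal.subset_span (by simp)
  have hq3 : (X 2 ^ 2 + C lam * X 0 * X 1 : MvPolynomial (Fin 3) ℝ) ∈ Iq :=
    Ideal.subset_span (by simp)
  have main : ∀ p a1 a2 a3 : MvPolynomial (Fin 3) ℝ, a1 ∈ m ^ 2 → a2 ∈ m ^ 2 → a3 ∈ m ^ 2 →
      C (1 + lam ^ 3) * p =
        a1 * (X 0 ^ 2 + C lam * X 1 * X 2) + a2 * (X 1 ^ 2 + C lam * X 2 * X 0) +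
          a3 * (X 2 ^ 2 + C lam * X 0 * X 1) →
      p ∈ m ^ 2 * Iq := by
    intro p a1 a2 a3 h1 h2 h3 heq
    have hmem : C (1 + lam ^ 3) * p ∈ m ^ 2 * Iq := by
      rw [heq]
      exact add_mem (add_mem (Ideal.mul_mem_mul h1 hq1) (Ideal.mul_mem_mul h2 hq2))
        (Ideal.mul_mem_mul h3 hq3)
    have h := Ideal.mul_mem_left _ (C (1 + lam ^ 3)⁻¹) hmem
    rwa [← mul_assoc, ← C_mul, inv_mul_cancel₀ hD, C_1, one_mul] at h
  have k400 : (X 0 : MvPolynomial (Fin 3) ℝ) ^ 4 * X 1 ^ 0 * X 2 ^ 0 ∈ m ^ 2 * Iq := by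
    refine main _ ((1 + C lam ^ 3) * (X 0 * X 0) + (-(C lam)) * (X 1 * X 2)) ((-(C lam ^ 3)) * (X 0 * X 1)) ((C lam ^ 2) * (X 1 * X 1)) (add_mem (Ideal.mul_mem_left _ _ (hx 0 0)) (Ideal.mul_mem_left _ _ (hx 1 2))) (Ideal.mul_mem_left _ _ (hx 0 1)) (Ideal.mul_mem_left _ _ (hx 1 1)) ?_
    rw [map_add, map_one, map_pow]; ring
  have k040 : (X 0 : MvPolynomial (Fin 3) ℝ) ^ 0 * X 1 ^ 4 * X 2 ^ 0 ∈ m ^ 2 * Iq := by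
    refine main _ ((C lam ^ 2) * (X 2 * X 2)) ((1 + C lam ^ 3) * (X 1 * X 1) + (-(C lam)) * (X 2 * X 0)) ((-(C lam ^ 3)) * (X 1 * X 2)) (Ideal.mul_mem_left _ _ (hx 2 2)) (add_mem (Ideal.mul_mem_left _ _ (hx 1 1)) (Ideal.mul_mem_left _ _ (hx 2 0))) (Ideal.mul_mem_left _ _ (hx 1 2)) ?_
    rw [map_add, map_one, map_pow]; ring
  have k004 : (X 0 : MvPolynomial (Fin 3) ℝ) ^ 0 * X 1 ^ 0 * X 2 ^ 4 ∈ m ^ 2 * Iq := by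
    refine main _ ((-(C lam ^ 3)) * (X 2 * X 0)) ((C lam ^ 2) * (X 0 * X 0)) ((1 + C lam ^ 3) * (X 2 * X 2) + (-(C lam)) * (X 0 * X 1)) (Ideal.mul_mem_left _ _ (hx 2 0)) (Ideal.mul_mem_left _ _ (hx 0 0)) (add_mem (Ideal.mul_mem_left _ _ (hx 2 2)) (Ideal.mul_mem_left _ _ (hx 0 1))) ?_
    rw [map_add, map_one, map_pow]; ring
  have k310 : (X 0 : MvPolynomial (Fin 3) ℝ) ^ 3 * X 1 ^ 1 * X 2 ^ 0 ∈ m ^ 2 * Iq := by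
    refine main _ ((1 + C lam ^ 3) * (X 0 * X 1) + (C lam ^ 2) * (X 2 * X 2)) ((-(C lam)) * (X 2 * X 0)) ((-(C lam ^ 3)) * (X 1 * X 2)) (add_mem (Ideal.mul_mem_left _ _ (hx 0 1)) (Ideal.mul_mem_left _ _ (hx 2 2))) (Ideal.mul_mem_left _ _ (hx 2 0)) (Ideal.mul_mem_left _ _ (hx 1 2)) ?_
    rw [map_add, map_one, map_pow]; ring
  have k031 : (X 0 : MvPolynomial (Fin 3) ℝ) ^ 0 * X 1 ^ 3 * X 2 ^ 1 ∈ m ^ 2 * Iq := by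
    refine main _ ((-(C lam ^ 3)) * (X 2 * X 0)) ((1 + C lam ^ 3) * (X 1 * X 2) + (C lam ^ 2) * (X 0 * X 0)) ((-(C lam)) * (X 0 * X 1)) (Ideal.mul_mem_left _ _ (hx 2 0)) (add_mem (Ideal.mul_mem_left _ _ (hx 1 2)) (Ideal.mul_mem_left _ _ (hx 0 0))) (Ideal.mul_mem_left _ _ (hx 0 1)) ?_
    rw [map_add, map_one, map_pow]; ring
  have k103 : (X 0 : MvPolynomial (Fin 3) ℝ) ^ 1 * X 1 ^ 0 * X 2 ^ 3 ∈ m ^ 2 * Iq := by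
    refine main _ ((-(C lam)) * (X 1 * X 2)) ((-(C lam ^ 3)) * (X 0 * X 1)) ((1 + C lam ^ 3) * (X 2 * X 0) + (C lam ^ 2) * (X 1 * X 1)) (Ideal.mul_mem_left _ _ (hx 1 2)) (Ideal.mul_mem_left _ _ (hx 0 1)) (add_mem (Ideal.mul_mem_left _ _ (hx 2 0)) (Ideal.mul_mem_left _ _ (hx 1 1))) ?_
    rw [map_add, map_one, map_pow]; ring
  have k301 : (X 0 : MvPolynomial (Fin 3) ℝ) ^ 3 * X 1 ^ 0 * X 2 ^ 1 ∈ m ^ 2 * Iq := by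
    refine main _ ((1 : MvPolynomial (Fin 3) ℝ) * (X 2 * X 0)) ((C lam ^ 2) * (X 0 * X 0)) ((-(C lam)) * (X 0 * X 1)) (Ideal.mul_mem_left _ _ (hx 2 0)) (Ideal.mul_mem_left _ _ (hx 0 0)) (Ideal.mul_mem_left _ _ (hx 0 1)) ?_
    rw [map_add, map_one, map_pow]; ring
  have k130 : (X 0 : MvPolynomial (Fin 3) ℝ) ^ 1 * X 1 ^ 3 * X 2 ^ 0 ∈ m ^ 2 * Iq := by
    refine main _ ((-(C lam)) * (X 1 * X 2)) ((1 : MvPolynomial (Fin 3) ℝ) * (X 0 * X 1)) ((C lam ^ 2) * (X 1 * X 1)) (Ideal.mul_mem_left _ _ (hx 1 2)) (Ideal.mul_mem_left _ _ (hx 0 1)) (Ideal.mul_mem_left _ _ (hx 1 1)) ?_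
    rw [map_add, map_one, map_pow]; ring
  have k013 : (X 0 : MvPolynomial (Fin 3) ℝ) ^ 0 * X 1 ^ 1 * X 2 ^ 3 ∈ m ^ 2 * Iq := by
    refine main _ ((C lam ^ 2) * (X 2 * X 2)) ((-(C lam)) * (X 2 * X 0)) ((1 : MvPolynomial (Fin 3) ℝ) * (X 1 * X 2)) (Ideal.mul_mem_left _ _ (hx 2 2)) (Ideal.mul_mem_left _ _ (hx 2 0)) (Ideal.mul_mem_left _ _ (hx 1 2)) ?_
    rw [map_add, map_one, map_pow]; ring
  have k220 : (X 0 : MvPolynomial (Fin 3) ℝ) ^ 2 * X 1 ^ 2 * X 2 ^ 0 ∈ m ^ 2 * Iq := by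
    refine main _ ((-(C lam)) * (X 2 * X 0)) ((1 : MvPolynomial (Fin 3) ℝ) * (X 0 * X 0)) ((C lam ^ 2) * (X 0 * X 1)) (Ideal.mul_mem_left _ _ (hx 2 0)) (Ideal.mul_mem_left _ _ (hx 0 0)) (Ideal.mul_mem_left _ _ (hx 0 1)) ?_
    rw [map_add, map_one, map_pow]; ring
  have k022 : (X 0 : MvPolynomial (Fin 3) ℝ) ^ 0 * X 1 ^ 2 * X 2 ^ 2 ∈ m ^ 2 * Iq := by
    refine main _ ((C lam ^ 2) * (X 1 * X 2)) ((-(C lam)) * (X 0 * X 1)) ((1 : MvPolynomial (Fin 3) ℝ) * (X 1 * X 1)) (Ideal.mul_mem_left _ _ (hx 1 2)) (Ideal.mul_mem_left _ _ (hx 0 1)) (Ideal.mul_mem_left _ _ (hx 1 1)) ?_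
    rw [map_add, map_one, map_pow]; ring
  have k202 : (X 0 : MvPolynomial (Fin 3) ℝ) ^ 2 * X 1 ^ 0 * X 2 ^ 2 ∈ m ^ 2 * Iq := by
    refine main _ ((1 : MvPolynomial (Fin 3) ℝ) * (X 2 * X 2)) ((C lam ^ 2) * (X 2 * X 0)) ((-(C lam)) * (X 1 * X 2)) (Ideal.mul_mem_left _ _ (hx 2 2)) (Ideal.mul_mem_left _ _ (hx 2 0)) (Ideal.mul_mem_left _ _ (hx 1 2)) ?_
    rw [map_add, map_one, map_pow]; ring
  have k211 : (X 0 : MvPolynomial (Fin 3) ℝ) ^ 2 * X 1 ^ 1 * X 2 ^ 1 ∈ m ^ 2 * Iq := by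
    refine main _ ((1 : MvPolynomial (Fin 3) ℝ) * (X 1 * X 2)) ((C lam ^ 2) * (X 0 * X 1)) ((-(C lam)) * (X 1 * X 1)) (Ideal.mul_mem_left _ _ (hx 1 2)) (Ideal.mul_mem_left _ _ (hx 0 1)) (Ideal.mul_mem_left _ _ (hx 1 1)) ?_
    rw [map_add, map_one, map_pow]; ring
  have k121 : (X 0 : MvPolynomial (Fin 3) ℝ) ^ 1 * X 1 ^ 2 * X 2 ^ 1 ∈ m ^ 2 * Iq := by
    refine main _ ((-(C lam)) * (X 2 * X 2)) ((1 : MvPolynomial (Fin 3) ℝ) * (X 2 * X 0)) ((C lam ^ 2) * (X 1 * X 2)) (Ideal.mul_mem_left _ _ (hx 2 2)) (Ideal.mul_mem_left _ _ (hx 2 0)) (Ideal.mul_mem_left _ _ (hx 1 2)) ?_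
    rw [map_add, map_one, map_pow]; ring
  have k112 : (X 0 : MvPolynomial (Fin 3) ℝ) ^ 1 * X 1 ^ 1 * X 2 ^ 2 ∈ m ^ 2 * Iq := by
    refine main _ ((C lam ^ 2) * (X 2 * X 0)) ((-(C lam)) * (X 0 * X 0)) ((1 : MvPolynomial (Fin 3) ℝ) * (X 0 * X 1)) (Ideal.mul_mem_left _ _ (hx 2 0)) (Ideal.mul_mem_left _ _ (hx 0 0)) (Ideal.mul_mem_left _ _ (hx 0 1)) ?_
    rw [map_add, map_one, map_pow]; ring

  have key : ∀ a b c : ℕ, a + b + c = 4 →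
      (X 0 : MvPolynomial (Fin 3) ℝ) ^ a * X 1 ^ b * X 2 ^ c ∈ m ^ 2 * Iq := by
    intro a b c h
    have ha : a ≤ 4 := by omega
    interval_cases a <;>
      [skip; skip; skip; skip; skip] <;>
      (have hb : b ≤ 4 := by omega) <;>
    interval_cases b <;>
      (have hc : c ≤ 4 := by omega) <;>
    interval_cases c <;>
      first
        | with_reducible assumption
        | exact absurd h (by omega)
  constructor
  · apply le_antisymm
    · have hIle : Iq ≤ m ^ 2 := by
        rw [hIq]
        refine Ideal.span_le.mpr ?_
        intro p hp
        simp only [Set.mem_insert_iff, Set.mem_singleton_iff] at hp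
        rcases hp with rfl | rfl | rfl
        · exact memCongr (add_mem (hx 0 0) (Ideal.mul_mem_left _ (C lam) (hx 1 2))) (by ring)
        · exact memCongr (add_mem (hx 1 1) (Ideal.mul_mem_left _ (C lam) (hx 2 0))) (by ring)
        · exact memCongr (add_mem (hx 2 2) (Ideal.mul_mem_left _ (C lam) (hx 0 1))) (by ring)
      calc m ^ 2 * Iq ≤ m ^ 2 * m ^ 2 := Ideal.mul_mono_right hIle
        _ = m ^ 4 := by ring
    · have h4 : m ^ 4 = Ideal.span
          (({X 0, X 1, X 2} : Set (MvPolynomial (Fin 3) ℝ)) * ({X 0, X 1, X 2} : Set (MvPolynomial (Fin 3) ℝ)) * ({X 0, X 1, X 2} : Set (MvPolynomial (Fin 3) ℝ)) * ({X 0, X 1, X 2} : Set (MvPolynomial (Fin 3) ℝ))) := by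
        rw [hm, show (Ideal.span ({X 0, X 1, X 2} : Set (MvPolynomial (Fin 3) ℝ))) ^ 4 =
          Ideal.span {X 0, X 1, X 2} * Ideal.span {X 0, X 1, X 2} *
            Ideal.span {X 0, X 1, X 2} * Ideal.span {X 0, X 1, X 2} by ring,
          Ideal.span_mul_span', Ideal.span_mul_span', Ideal.span_mul_span']
      rw [h4]
      refine Ideal.span_le.mpr ?_
      rintro _ ⟨_, ⟨_, ⟨a, ha, b, hb, rfl⟩, c, hc, rfl⟩, d, hd, rfl⟩
      simp only [Set.mem_insert_iff, Set.mem_singleton_iff] at ha hb hc hd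
      rcases ha with rfl | rfl | rfl <;> rcases hb with rfl | rfl | rfl <;>
        rcases hc with rfl | rfl | rfl <;> rcases hd with rfl | rfl | rfl <;>
      first |
        (refine memCongr k400 ?_; ring1) |
        (refine memCongr k040 ?_; ring1) |
        (refine memCongr k004 ?_; ring1) |
        (refine memCongr k310 ?_; ring1) |
        (refine memCongr k031 ?_; ring1) |
        (refine memCongr k103 ?_; ring1) |
        (refine memCongr k301 ?_; ring1) |
        (refine memCongr k130 ?_; ring1) |
        (refine memCongr k013 ?_; ring1) |
        (refine memCongr k220 ?_; ring1) |
        (refine memCongr k022 ?_; ring1) |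
        (refine memCongr k202 ?_; ring1) |
        (refine memCongr k211 ?_; ring1) |
        (refine memCongr k121 ?_; ring1) |
        (refine memCongr k112 ?_; ring1)
  · intro a b c h
    exact Ideal.mul_le_right (key a b c h)
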